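/- Let R be a commutative Noetherian ring, let E be an injective R-module, and let F be a flat R-module. Then the tensor product E ⊗_R F is an injective R-module. -/

import Mathlib

/-!
Over a commutative Noetherian ring `R`, the tensor product of an injective `R`-module
with a flat `R`-module is injective.
-/

universe u

open TensorProduct

section Aux

open LinearMap

variable (R : Type u) [CommRing R]
variable (E : Type u) [AddCommGroup E] [Module R E]
variable (F : Type u) [AddCommGroup F] [Module R F]

/-- Naturality of the map `Hom(·,E) ⊗ F → Hom(·, E ⊗ F)`. -/
theorem aux_natural_comp {P L : Type u} [AddCommGroup P] [Module R P]
    [AddCommGroup L] [Module R L] (p : L →ₗ[R] P) (w : (P →ₗ[R] E) ⊗[R] F) :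
    rTensorHomToHomRTensor (.id R) L E F ((LinearMap.rTensor F (LinearMap.lcomp R E p)) w)
      = (rTensorHomToHomRTensor (.id R) P E F w).comp p := by
  induction w with
  | zero => simp
  | tmul f q =>
      ext m
      simp [rTensorHomToHomRTensor_apply]
  | add x y hx hy =>
      simp only [map_add, hx, hy]
      ext m
      simp

/-- For a finitely presented module `P` and flat module `F`, the natural map
`Hom(P,E) ⊗ F → Hom(P, E ⊗ F)` is surjective. -/
theorem aux_phi_surjective [Module.Flat R F]
    (P : Type u) [AddCommGroup P] [Module R P] [Module.FinitePresentation R P] :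
    Function.Surjective (rTensorHomToHomRTensor (.id R) P E F) := by
  classical
  obtain ⟨L, _, _, K, ϕ, hfree, hfin, hK⟩ := Module.FinitePresentation.equiv_quotient R P
  obtain ⟨s, hs⟩ := hK
  let d : ({x : L // x ∈ s} →₀ R) →ₗ[R] L := Finsupp.linearCombination R Subtype.val
  have hranged : LinearMap.range d = K := by
    rw [Finsupp.range_linearCombination, Subtype.range_coe_subtype]
    simpa using hs
  let p : L →ₗ[R] P := ϕ.symm.toLinearMap ∘ₗ K.mkQ
  have hp : Function.Surjective p := ϕ.symm.surjective.comp K.mkQ_surjective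
  have hkerp : LinearMap.ker p = K := by
    rw [LinearMap.ker_comp]
    simp [Submodule.ker_mkQ]
  have hpd : p ∘ₗ d = 0 := LinearMap.ext fun x => by
    have hx : d x ∈ LinearMap.ker p := by
      rw [hkerp, ← hranged]; exact ⟨x, rfl⟩
    simpa using hx
  -- left exactness of Hom(·, E)
  have hexact1 : Function.Exact (lcomp R E p) (lcomp R E d) := by
    rw [LinearMap.exact_iff]
    ext f
    constructor
    · intro hf
      have hKf : K ≤ LinearMap.ker f := by
        rw [← hranged]
        rintro _ ⟨x, rfl⟩
        exact LinearMap.congr_fun hf x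
      refine ⟨(K.liftQ f hKf) ∘ₗ ϕ.toLinearMap, ?_⟩
      ext x
      simp [p]
    · rintro ⟨h, rfl⟩
      show (h ∘ₗ p) ∘ₗ d = 0
      rw [LinearMap.comp_assoc, hpd, LinearMap.comp_zero]
  have hexactT : Function.Exact (LinearMap.rTensor F (lcomp R E p))
      (LinearMap.rTensor F (lcomp R E d)) := Module.Flat.rTensor_exact F hexact1
  have hL : Function.Bijective (rTensorHomToHomRTensor (.id R) L E F) := by
    rw [← rTensorHomEquivHomRTensor_toLinearMap]
    exact (rTensorHomEquivHomRTensor R L E F).bijective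
  have hN : Function.Injective
      (rTensorHomToHomRTensor (.id R) ({x : L // x ∈ s} →₀ R) E F) := by
    rw [← rTensorHomEquivHomRTensor_toLinearMap]
    exact (rTensorHomEquivHomRTensor R _ E F).injective
  intro g
  obtain ⟨u, hu⟩ := hL.surjective (g ∘ₗ p)
  have hud : (LinearMap.rTensor F (lcomp R E d)) u = 0 := by
    apply hN
    rw [aux_natural_comp, hu, map_zero, LinearMap.comp_assoc, hpd, LinearMap.comp_zero]
  obtain ⟨w, hw⟩ := (hexactT u).mp hud
  refine ⟨w, ?_⟩
  have hnat := aux_natural_comp R E F p w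
  rw [hw, hu] at hnat
  ext x
  obtain ⟨y, rfl⟩ := hp x
  exact (LinearMap.congr_fun hnat.symm y)

end Aux

theorem injective_tensorProduct_flat
    (R : Type u) [CommRing R] [IsNoetherianRing R]
    (E : Type u) [AddCommGroup E] [Module R E]
    (F : Type u) [AddCommGroup F] [Module R F]
    (hE : Module.Injective R E) (hF : Module.Flat R F) :
    Module.Injective R (E ⊗[R] F) := by
  haveI := hF
  have hBaer : Module.Baer R E := Module.Baer.of_injective hE
  refine Module.Baer.injective ?_
  intro I g
  haveI : Module.Finite R I := Module.Finite.iff_fg.mpr (IsNoetherian.noetherian I)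
  haveI : Module.FinitePresentation R I := Module.finitePresentation_of_finite R I
  obtain ⟨w, hw⟩ := aux_phi_surjective R E F I g
  suffices h : ∃ g' : R →ₗ[R] E ⊗[R] F, ∀ (x : R) (mem : x ∈ I),
      g' x = (TensorProduct.rTensorHomToHomRTensor (.id R) I E F w) ⟨x, mem⟩ by
    simpa [hw] using h
  clear hw g
  induction w with
  | zero => exact ⟨0, by simp⟩
  | tmul f q =>
      obtain ⟨f', hf'⟩ := hBaer I f
      refine ⟨((TensorProduct.mk R E F).flip q).comp f', fun x mem => ?_⟩
      simp [TensorProduct.rTensorHomToHomRTensor_apply, hf' x mem]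
  | add x y hx hy =>
      obtain ⟨gx, hgx⟩ := hx
      obtain ⟨gy, hgy⟩ := hy
      exact ⟨gx + gy, fun x mem => by simp [hgx x mem, hgy x mem]⟩
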